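/- Let c ∈ (ℝ^d)*. Let (x,y) ∈ Ā_c and let z ∈ ℝ^d be the point determined by ∂₂S(x,y) + ∂₁S(y,z) = 0 (so that (y,z) is the image of (x,y) under the shift map φ). Then Σ̃_c ≥ S(x,y) + S(y,z) − S(x,z). -/

import Mathlib

noncomputable section

/-- Configuration space `ℝ^d` with the Euclidean norm. -/
abbrev Ed (d : ℕ) := EuclideanSpace ℝ (Fin d)

/-- The point of `ℝ^d` with integer coordinates given by `r ∈ ℤ^d`. -/
def intVec (d : ℕ) (r : Fin d → ℤ) : Ed d := WithLp.toLp 2 (fun i => (r i : ℝ))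

/-- A generating function: a `C²` map `S : ℝ^d × ℝ^d → ℝ` which is `ℤ^d`-periodic for
the diagonal action and satisfies the uniform twist condition
`∑_{i,j} ∂²S/∂xᵢ∂yⱼ (x,y) ξᵢ ξⱼ ≤ -A‖ξ‖²` (expressed via the second derivative of `S`
applied to `((ξ,0),(0,ξ))`). -/
def IsGenFn {d : ℕ} (S : Ed d × Ed d → ℝ) : Prop :=
  ContDiff ℝ 2 S ∧
  (∀ (r : Fin d → ℤ) (x y : Ed d), S (x + intVec d r, y + intVec d r) = S (x, y)) ∧
  ∃ A : ℝ, 0 < A ∧ ∀ (x y ξ : Ed d),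
    iteratedFDeriv ℝ 2 S (x, y) ![(ξ, 0), (0, ξ)] ≤ -A * ‖ξ‖ ^ 2

/-- `∂₁S`, the partial differential of `S` with respect to its first variable. -/
def D1 {d : ℕ} (S : Ed d × Ed d → ℝ) (x y : Ed d) : Ed d →L[ℝ] ℝ :=
  fderiv ℝ (fun z => S (z, y)) x

/-- `∂₂S`, the partial differential of `S` with respect to its second variable. -/
def D2 {d : ℕ} (S : Ed d × Ed d → ℝ) (x y : Ed d) : Ed d →L[ℝ] ℝ :=
  fderiv ℝ (fun z => S (x, z)) y

/-- A bi-infinite sequence `(x_n)_{n∈ℤ}` is extremal if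
`∂₂S(x_{n-1}, x_n) + ∂₁S(x_n, x_{n+1}) = 0` for every `n`. -/
def IsExtremal {d : ℕ} (S : Ed d × Ed d → ℝ) (u : ℤ → Ed d) : Prop :=
  ∀ n : ℤ, D2 S (u (n - 1)) (u n) + D1 S (u n) (u (n + 1)) = 0

/-- The action `S(x_0, …, x_n)` of a finite sequence. -/
def act {d : ℕ} (S : Ed d × Ed d → ℝ) (n : ℕ) (γ : ℕ → Ed d) : ℝ :=
  ∑ k ∈ Finset.range n, S (γ k, γ (k + 1))

/-- The sequence `(x, z_1, …, z_{N-1}, y)` built from interior points `z`. -/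
def path {d : ℕ} (x y : Ed d) (N : ℕ) (z : Fin (N - 1) → Ed d) : ℕ → Ed d :=
  fun k => if h0 : k = 0 then x else if h : k < N then z ⟨k - 1, by omega⟩ else y

/-- The fixed-endpoint action `S_{x,y,N} : (x_1, …, x_{N-1}) ↦ S(x, x_1, …, x_{N-1}, y)`. -/
def fixedAct {d : ℕ} (S : Ed d × Ed d → ℝ) (x y : Ed d) (N : ℕ) :
    (Fin (N - 1) → Ed d) → ℝ :=
  fun z => act S N (path x y N z)

/-- `S` has no conjugate points: for all `x, y` and `N ≥ 2`, the fixed-endpoint action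
`S_{x,y,N}` has exactly one critical point, and attains its global minimum there. -/
def NoConjPts {d : ℕ} (S : Ed d × Ed d → ℝ) : Prop :=
  ∀ (x y : Ed d) (N : ℕ), 2 ≤ N →
    ∃ z : Fin (N - 1) → Ed d,
      fderiv ℝ (fixedAct S x y N) z = 0 ∧
      (∀ w, fixedAct S x y N z ≤ fixedAct S x y N w) ∧
      (∀ z', fderiv ℝ (fixedAct S x y N) z' = 0 → z' = z)

/-- `A_N(x,y)`: the minimum of the fixed-endpoint action `S_{x,y,N}` for `N ≥ 2`,
and `S(x,y)` for `N = 1`. -/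
def AN {d : ℕ} (S : Ed d × Ed d → ℝ) (N : ℕ) (x y : Ed d) : ℝ :=
  if N ≤ 1 then S (x, y) else sInf (Set.range (fixedAct S x y N))

/-- The minimizing holonomic value `Σ̃(S)`. -/
def holVal {d : ℕ} (S : Ed d × Ed d → ℝ) : ℝ :=
  sInf { v : ℝ | ∃ n : ℕ, 1 ≤ n ∧ ∃ γ : ℕ → Ed d,
    (∃ r : Fin d → ℤ, γ n - γ 0 = intVec d r) ∧ v = act S n γ / n }

/-- The normalized action `S̃(x_0, …, x_n) = S(x_0, …, x_n) - n Σ̃(S)`. -/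
def actTilde {d : ℕ} (S : Ed d × Ed d → ℝ) (n : ℕ) (γ : ℕ → Ed d) : ℝ :=
  act S n γ - n * holVal S

/-- The Mañé potential `π(x,y)`. -/
def manePot {d : ℕ} (S : Ed d × Ed d → ℝ) (x y : Ed d) : ℝ :=
  sInf { v : ℝ | ∃ n : ℕ, 1 ≤ n ∧ ∃ γ : ℕ → Ed d,
    γ 0 = x ∧ (∃ r : Fin d → ℤ, γ n - y = intVec d r) ∧ v = actTilde S n γ }

/-- The Aubry set `Ā(S) ⊂ ℝ^d × ℝ^d`. -/
def aubry {d : ℕ} (S : Ed d × Ed d → ℝ) : Set (Ed d × Ed d) :=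
  { p | ∀ ε > 0, ∃ n : ℕ, 1 ≤ n ∧ ∃ γ : ℕ → Ed d,
      (∃ r : Fin d → ℤ, γ n - γ 0 = intVec d r) ∧
      ‖p.1 - γ 0‖ < ε ∧ ‖p.2 - γ 1‖ < ε ∧ actTilde S n γ < ε }

/-- The generating function `S_c(x,y) = S(x,y) + c(x - y)` associated to a cohomology
class `c ∈ (ℝ^d)*`. -/
def Sc {d : ℕ} (S : Ed d × Ed d → ℝ) (c : Ed d →L[ℝ] ℝ) : Ed d × Ed d → ℝ :=
  fun p => S p + c (p.1 - p.2)


namespace Stmt14Aux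

open Finset

lemma exists_int_close {d : ℕ} (w : Ed d) :
    ∃ r : Fin d → ℤ, ‖w - intVec d r‖ ≤ Real.sqrt d := by
  refine ⟨fun i => ⌊w i⌋, ?_⟩
  rw [EuclideanSpace.norm_eq]
  have hb : ∀ i : Fin d, ‖(w - intVec d (fun i => ⌊w i⌋)) i‖ ^ 2 ≤ 1 := by
    intro i
    have h1 : (w - intVec d (fun i => ⌊w i⌋)) i = Int.fract (w i) := by simp [intVec]
    rw [h1, Real.norm_eq_abs, abs_of_nonneg (Int.fract_nonneg _)]
    have h2 := Int.fract_lt_one (w i)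
    have h3 := Int.fract_nonneg (w i)
    nlinarith
  calc Real.sqrt (∑ i, ‖(w - intVec d (fun i => ⌊w i⌋)) i‖ ^ 2)
      ≤ Real.sqrt (∑ _i : Fin d, (1 : ℝ)) :=
        Real.sqrt_le_sqrt (Finset.sum_le_sum fun i _ => hb i)
    _ = Real.sqrt d := by simp

lemma periodic_bddAbove {d : ℕ} (h : Ed d → ℝ) (hc : Continuous h)
    (hp : ∀ (w : Ed d) (r : Fin d → ℤ), h (w + intVec d r) = h w) :
    ∃ K : ℝ, ∀ w, h w ≤ K := by
  obtain ⟨x₀, hx₀, hmax⟩ := (isCompact_closedBall (0 : Ed d) (Real.sqrt d)).exists_isMaxOn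
    ⟨0, by simp [Real.sqrt_nonneg]⟩ hc.continuousOn
  rw [isMaxOn_iff] at hmax
  refine ⟨h x₀, fun w => ?_⟩
  obtain ⟨r, hr⟩ := exists_int_close w
  have h1 : h w = h (w - intVec d r) := by
    rw [← hp (w - intVec d r) r, sub_add_cancel]
  rw [h1]
  exact hmax _ (by simpa [mem_closedBall_zero_iff] using hr)

lemma slope_le {φ ψ : ℝ → ℝ} {C : ℝ} (h : ∀ t, HasDerivAt φ (ψ t) t)
    (hb : ∀ t, ψ t ≤ C) {a b : ℝ} (hab : a ≤ b) : φ b - φ a ≤ C * (b - a) := by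
  have hg : ∀ t : ℝ, HasDerivAt (fun s => C * s - φ s) (C - ψ t) t := by
    intro t
    exact (((hasDerivAt_id t).const_mul C).sub (h t)).congr_deriv (by simp)
  have hmono : Monotone (fun s => C * s - φ s) :=
    monotone_of_deriv_nonneg (fun t => (hg t).differentiableAt)
      (fun t => by rw [(hg t).deriv]; linarith [hb t])
  have h2 : C * a - φ a ≤ C * b - φ b := hmono hab
  have h3 : C * (b - a) = C * b - C * a := by ring
  linarith

variable {d : ℕ} {S : Ed d × Ed d → ℝ} {A : ℝ}

lemma twist' (htw : ∀ x y ξ : Ed d, iteratedFDeriv ℝ 2 S (x, y) ![(ξ, 0), (0, ξ)] ≤ -A * ‖ξ‖ ^ 2)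
    (p : Ed d × Ed d) (ξ : Ed d) :
    fderiv ℝ (fderiv ℝ S) p (ξ, 0) (0, ξ) ≤ -A * ‖ξ‖ ^ 2 := by
  obtain ⟨px, py⟩ := p
  have h := htw px py ξ
  rwa [iteratedFDeriv_two_apply] at h

lemma twist'' (hd1 : Differentiable ℝ S) (hd2 : Differentiable ℝ (fderiv ℝ S))
    (htw : ∀ x y ξ : Ed d, iteratedFDeriv ℝ 2 S (x, y) ![(ξ, 0), (0, ξ)] ≤ -A * ‖ξ‖ ^ 2)
    (p : Ed d × Ed d) (ξ : Ed d) :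
    fderiv ℝ (fderiv ℝ S) p (0, ξ) (ξ, 0) ≤ -A * ‖ξ‖ ^ 2 := by
  have hsymm := second_derivative_symmetric (f := S) (f' := fderiv ℝ S)
    (f'' := fderiv ℝ (fderiv ℝ S) p) (fun q => (hd1 q).hasFDerivAt)
    ((hd2 p).hasFDerivAt) ((0 : Ed d), ξ) ((ξ, 0) : Ed d × Ed d)
  rw [hsymm]
  exact twist' htw p ξ

lemma curve_hasDerivAt2 (hd2 : Differentiable ℝ (fderiv ℝ S)) (u z δ : Ed d) (t : ℝ) :
    HasDerivAt (fun s : ℝ => fderiv ℝ S (u, z + s • δ) ((δ, 0) : Ed d × Ed d))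
      (fderiv ℝ (fderiv ℝ S) (u, z + t • δ) (0, δ) (δ, 0)) t := by
  have hcurve : HasDerivAt (fun s : ℝ => ((u, z + s • δ) : Ed d × Ed d)) (0, δ) t := by
    refine (hasDerivAt_const t u).prodMk ?_
    simpa using ((hasDerivAt_id t).smul_const δ).const_add z
  have h1 := (hd2 (u, z + t • δ)).hasFDerivAt.comp_hasDerivAt t hcurve
  have h2 := h1.clm_apply (hasDerivAt_const t ((δ, 0) : Ed d × Ed d))
  simpa using h2

lemma curve_hasDerivAt1 (hd2 : Differentiable ℝ (fderiv ℝ S)) (w p δ : Ed d) (t : ℝ) :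
    HasDerivAt (fun s : ℝ => fderiv ℝ S (p + s • δ, w) ((0, δ) : Ed d × Ed d))
      (fderiv ℝ (fderiv ℝ S) (p + t • δ, w) (δ, 0) (0, δ)) t := by
  have hcurve : HasDerivAt (fun s : ℝ => ((p + s • δ, w) : Ed d × Ed d)) (δ, 0) t := by
    refine HasDerivAt.prodMk ?_ (hasDerivAt_const t w)
    simpa using ((hasDerivAt_id t).smul_const δ).const_add p
  have h1 := (hd2 (p + t • δ, w)).hasFDerivAt.comp_hasDerivAt t hcurve
  have h2 := h1.clm_apply (hasDerivAt_const t ((0, δ) : Ed d × Ed d))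
  simpa using h2

lemma strong_mono (hd1 : Differentiable ℝ S) (hd2 : Differentiable ℝ (fderiv ℝ S))
    (htw : ∀ x y ξ : Ed d, iteratedFDeriv ℝ 2 S (x, y) ![(ξ, 0), (0, ξ)] ≤ -A * ‖ξ‖ ^ 2)
    (u z δ : Ed d) :
    fderiv ℝ S (u, z + δ) (δ, 0) ≤ fderiv ℝ S (u, z) (δ, 0) - A * ‖δ‖ ^ 2 := by
  have h := slope_le (φ := fun s : ℝ => fderiv ℝ S (u, z + s • δ) ((δ, 0) : Ed d × Ed d))
    (ψ := fun s : ℝ => fderiv ℝ (fderiv ℝ S) (u, z + s • δ) (0, δ) (δ, 0))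
    (C := -A * ‖δ‖ ^ 2)
    (fun t => curve_hasDerivAt2 hd2 u z δ t)
    (fun t => twist'' hd1 hd2 htw _ δ) (zero_le_one)
  simp only [one_smul, zero_smul, add_zero, mul_one] at h
  linarith

lemma strong_mono1 (hd2 : Differentiable ℝ (fderiv ℝ S))
    (htw : ∀ x y ξ : Ed d, iteratedFDeriv ℝ 2 S (x, y) ![(ξ, 0), (0, ξ)] ≤ -A * ‖ξ‖ ^ 2)
    (w p δ : Ed d) {t : ℝ} (ht : 0 ≤ t) :
    fderiv ℝ S (p + t • δ, w) (0, δ) ≤ fderiv ℝ S (p, w) (0, δ) - A * t * ‖δ‖ ^ 2 := by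
  have h := slope_le (φ := fun s : ℝ => fderiv ℝ S (p + s • δ, w) ((0, δ) : Ed d × Ed d))
    (ψ := fun s : ℝ => fderiv ℝ (fderiv ℝ S) (p + s • δ, w) (δ, 0) (0, δ))
    (C := -A * ‖δ‖ ^ 2)
    (fun s => curve_hasDerivAt1 hd2 w p δ s)
    (fun s => twist' htw _ δ) ht
  simp only [zero_smul, add_zero] at h
  nlinarith [h]


lemma superlin (hd1 : Differentiable ℝ S) (hd2 : Differentiable ℝ (fderiv ℝ S))
    (htw : ∀ x y ξ : Ed d, iteratedFDeriv ℝ 2 S (x, y) ![(ξ, 0), (0, ξ)] ≤ -A * ‖ξ‖ ^ 2)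
    {K1 : ℝ} (hK : ∀ w : Ed d, ‖fderiv ℝ S (w, w)‖ ≤ K1) (u v : Ed d) :
    S (u, u) + (A / 2) * ‖v - u‖ ^ 2 - K1 * ‖v - u‖ ≤ S (u, v) := by
  set δ := v - u with hδ
  have hθ : ∀ t : ℝ, HasDerivAt (fun s : ℝ => S (u, u + s • δ))
      (fderiv ℝ S (u, u + t • δ) (0, δ)) t := by
    intro t
    have hcurve : HasDerivAt (fun s : ℝ => ((u, u + s • δ) : Ed d × Ed d)) (0, δ) t := by
      refine (hasDerivAt_const t u).prodMk ?_
      simpa using ((hasDerivAt_id t).smul_const δ).const_add u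
    simpa [Function.comp_def] using (hd1 (u, u + t • δ)).hasFDerivAt.comp_hasDerivAt t hcurve
  have key : ∀ t : ℝ, 0 ≤ t →
      -(K1 * ‖δ‖) + A * t * ‖δ‖ ^ 2 ≤ fderiv ℝ S (u, u + t • δ) (0, δ) := by
    intro t ht
    have h1 := strong_mono1 hd2 htw (u + t • δ) u δ ht
    have h3 := (fderiv ℝ S (u + t • δ, u + t • δ)).le_opNorm ((0, δ) : Ed d × Ed d)
    have h4 : ‖((0, δ) : Ed d × Ed d)‖ = ‖δ‖ := by
      simp [Prod.norm_def]
    rw [h4, Real.norm_eq_abs] at h3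
    have h5 : |fderiv ℝ S (u + t • δ, u + t • δ) (0, δ)| ≤ K1 * ‖δ‖ :=
      h3.trans (mul_le_mul_of_nonneg_right (hK _) (norm_nonneg _))
    have h6 := (abs_le.mp h5).1
    linarith
  have hΘ : ∀ t : ℝ, HasDerivAt
      (fun s : ℝ => S (u, u + s • δ) - A / 2 * ‖δ‖ ^ 2 * s ^ 2 + K1 * ‖δ‖ * s)
      (fderiv ℝ S (u, u + t • δ) (0, δ) - A / 2 * ‖δ‖ ^ 2 * (2 * t) + K1 * ‖δ‖) t := by
    intro t
    have h2 : HasDerivAt (fun s : ℝ => A / 2 * ‖δ‖ ^ 2 * s ^ 2)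
        (A / 2 * ‖δ‖ ^ 2 * (2 * t)) t := by
      have := (hasDerivAt_pow 2 t).const_mul (A / 2 * ‖δ‖ ^ 2)
      simpa [pow_one] using this
    have h3 : HasDerivAt (fun s : ℝ => K1 * ‖δ‖ * s) (K1 * ‖δ‖) t := by
      simpa using (hasDerivAt_id t).const_mul (K1 * ‖δ‖)
    exact ((hθ t).sub h2).add h3
  have hmono := monotoneOn_of_deriv_nonneg (convex_Icc (0 : ℝ) 1)
    (Differentiable.continuous (fun t => (hΘ t).differentiableAt)).continuousOn
    (fun t _ => (hΘ t).differentiableAt.differentiableWithinAt)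
    (fun t ht => by
      rw [(hΘ t).deriv]
      rw [interior_Icc] at ht
      have h1 := key t (le_of_lt ht.1)
      have h2 : A / 2 * ‖δ‖ ^ 2 * (2 * t) = A * t * ‖δ‖ ^ 2 := by ring
      linarith)
  have h0 : (0 : ℝ) ∈ Set.Icc (0 : ℝ) 1 := Set.left_mem_Icc.mpr zero_le_one
  have h1 : (1 : ℝ) ∈ Set.Icc (0 : ℝ) 1 := Set.right_mem_Icc.mpr zero_le_one
  have := hmono h0 h1 zero_le_one
  simp only [zero_smul, add_zero, one_smul, zero_pow, mul_zero, mul_one, sub_zero,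
    add_zero] at this
  have hv : u + δ = v := by rw [hδ]; abel
  rw [hv] at this
  nlinarith [this]

lemma fderiv_per (hd1 : Differentiable ℝ S)
    (hper : ∀ (r : Fin d → ℤ) (x y : Ed d), S (x + intVec d r, y + intVec d r) = S (x, y))
    (r : Fin d → ℤ) (x y : Ed d) :
    fderiv ℝ S (x + intVec d r, y + intVec d r) = fderiv ℝ S (x, y) := by
  have hT : HasFDerivAt (fun p : Ed d × Ed d => p + (intVec d r, intVec d r))
      (ContinuousLinearMap.id ℝ (Ed d × Ed d)) (x, y) :=
    (hasFDerivAt_id ((x, y) : Ed d × Ed d)).add_const (intVec d r, intVec d r)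
  have h2 : HasFDerivAt (fun p : Ed d × Ed d => S (p + (intVec d r, intVec d r)))
      (fderiv ℝ S ((x, y) + (intVec d r, intVec d r))) (x, y) := by
    simpa [Function.comp_def] using ((hd1 _).hasFDerivAt.comp ((x, y) : Ed d × Ed d) hT)
  have h3 : (fun p : Ed d × Ed d => S (p + (intVec d r, intVec d r))) = S := by
    funext p
    exact hper r p.1 p.2
  rw [h3] at h2
  exact (h2.fderiv).symm ▸ rfl



lemma double_loop {d : ℕ} {F : Ed d × Ed d → ℝ}
    (hper : ∀ (r : Fin d → ℤ) (u v : Ed d), F (u + intVec d r, v + intVec d r) = F (u, v))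
    {n : ℕ} (hn : 1 ≤ n) {γ : ℕ → Ed d} {r : Fin d → ℤ} (hγ : γ n - γ 0 = intVec d r) :
    ∃ δ : ℕ → Ed d, δ 0 = γ 0 ∧ δ 1 = γ 1 ∧
      (∃ r' : Fin d → ℤ, δ (n + n) - δ 0 = intVec d r') ∧
      act F (n + n) δ = act F n γ + act F n γ := by
  have h2 : γ n = γ 0 + intVec d r := by rw [← hγ]; abel
  refine ⟨fun k => if k ≤ n then γ k else γ (k - n) + intVec d r, by simp, by simp [hn], ?_, ?_⟩
  · refine ⟨fun i => r i + r i, ?_⟩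
    have hnn : ¬ (n + n ≤ n) := by omega
    simp only [hnn, if_false, Nat.zero_le, if_true]
    have h1 : n + n - n = n := by omega
    rw [h1, h2]
    ext i
    simp only [intVec, PiLp.sub_apply, PiLp.add_apply, PiLp.toLp_apply]
    push_cast
    ring
  · rw [act, act, Finset.sum_range_add]
    congr 1
    · refine Finset.sum_congr rfl (fun k hk => ?_)
      have hk' := Finset.mem_range.mp hk
      have e1 : k ≤ n := by omega
      have e2 : k + 1 ≤ n := by omega
      simp [e1, e2]
    · refine Finset.sum_congr rfl (fun i hi => ?_)
      have hi' := Finset.mem_range.mp hi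
      have e1 : (if n + i ≤ n then γ (n + i) else γ (n + i - n) + intVec d r)
          = γ i + intVec d r := by
        rcases Nat.eq_zero_or_pos i with h0 | h0
        · subst h0
          simp only [Nat.add_zero, le_refl, if_true]
          exact h2
        · have hni : ¬ (n + i ≤ n) := by omega
          simp only [hni, if_false]
          have hidx : n + i - n = i := by omega
          rw [hidx]
      have e2 : (if n + i + 1 ≤ n then γ (n + i + 1) else γ (n + i + 1 - n) + intVec d r)
          = γ (i + 1) + intVec d r := by
        have hni : ¬ (n + i + 1 ≤ n) := by omega
        simp only [hni, if_false]
        have hidx : n + i + 1 - n = i + 1 := by omega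
        rw [hidx]
      simp only [e1, e2]
      exact hper r (γ i) (γ (i + 1))

lemma act_update {d : ℕ} {F : Ed d × Ed d → ℝ} {m : ℕ} (hm : 2 ≤ m) (δ : ℕ → Ed d) (w : Ed d) :
    act F m (fun k => if k = 1 then w else δ k)
      = act F m δ - (F (δ 0, δ 1) + F (δ 1, δ 2)) + (F (δ 0, w) + F (w, δ 2)) := by
  have h01 : ({0, 1} : Finset ℕ) ⊆ Finset.range m := by
    intro k hk
    simp only [Finset.mem_insert, Finset.mem_singleton] at hk
    rcases hk with rfl | rfl <;> (rw [Finset.mem_range]; omega)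
  have hdiff : act F m (fun k => if k = 1 then w else δ k) - act F m δ
      = ∑ k ∈ Finset.range m,
          (F ((if k = 1 then w else δ k), (if k + 1 = 1 then w else δ (k + 1)))
            - F (δ k, δ (k + 1))) := by
    rw [act, act, ← Finset.sum_sub_distrib]
  rw [← Finset.sum_subset h01 ?hvan] at hdiff
  case hvan =>
    intro k _ hk
    simp only [Finset.mem_insert, Finset.mem_singleton] at hk
    push_neg at hk
    have h1 : k ≠ 1 := hk.2
    have h2 : k + 1 ≠ 1 := by omega
    simp [h1, h2, hk.1]
  rw [Finset.sum_pair (by norm_num : (0 : ℕ) ≠ 1)] at hdiff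
  norm_num at hdiff
  linarith

lemma act_skip {d : ℕ} {F : Ed d × Ed d → ℝ} {M : ℕ} (δ : ℕ → Ed d) :
    act F (M + 1) (fun k => if k = 0 then δ 0 else δ (k + 1))
      = act F (M + 2) δ - (F (δ 0, δ 1) + F (δ 1, δ 2)) + F (δ 0, δ 2) := by
  have h1 : act F (M + 1) (fun k => if k = 0 then δ 0 else δ (k + 1))
      = (∑ i ∈ Finset.range M, F (δ (i + 2), δ (i + 3))) + F (δ 0, δ 2) := by
    rw [act, Finset.sum_range_succ']
    congr 1
  have h2 : act F (M + 2) δ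
      = ((∑ i ∈ Finset.range M, F (δ (i + 2), δ (i + 3))) + F (δ 1, δ 2)) + F (δ 0, δ 1) := by
    rw [act, Finset.sum_range_succ', Finset.sum_range_succ']
  rw [h1, h2]
  ring

lemma D1_eq (hd1 : Differentiable ℝ S) (a b : Ed d) :
    D1 S a b = (fderiv ℝ S (a, b)).comp (ContinuousLinearMap.inl ℝ (Ed d) (Ed d)) :=
  ((hd1 (a, b)).hasFDerivAt.comp a (hasFDerivAt_prodMk_left a b)).fderiv

lemma D2_eq (hd1 : Differentiable ℝ S) (a b : Ed d) :
    D2 S a b = (fderiv ℝ S (a, b)).comp (ContinuousLinearMap.inr ℝ (Ed d) (Ed d)) :=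
  ((hd1 (a, b)).hasFDerivAt.comp b (hasFDerivAt_prodMk_right a b)).fderiv

lemma D1_hasFDerivAt (hd1 : Differentiable ℝ S) (a b : Ed d) :
    HasFDerivAt (fun w => S (w, b)) (D1 S a b) a := by
  rw [D1_eq hd1]
  exact ((hd1 (a, b)).hasFDerivAt.comp a (hasFDerivAt_prodMk_left a b))

lemma D2_hasFDerivAt (hd1 : Differentiable ℝ S) (a b : Ed d) :
    HasFDerivAt (fun w => S (a, w)) (D2 S a b) b := by
  rw [D2_eq hd1]
  exact ((hd1 (a, b)).hasFDerivAt.comp b (hasFDerivAt_prodMk_right a b))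

lemma D1_apply (hd1 : Differentiable ℝ S) (a b ξ : Ed d) :
    D1 S a b ξ = fderiv ℝ S (a, b) (ξ, 0) := by
  rw [D1_eq hd1]
  rfl

lemma D2_apply (hd1 : Differentiable ℝ S) (a b ξ : Ed d) :
    D2 S a b ξ = fderiv ℝ S (a, b) (0, ξ) := by
  rw [D2_eq hd1]
  rfl

lemma D1_cont (hd1 : Differentiable ℝ S) (hc : Continuous (fderiv ℝ S)) :
    Continuous (fun p : Ed d × Ed d => D1 S p.1 p.2) := by
  have he : (fun p : Ed d × Ed d => D1 S p.1 p.2)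
      = fun p => (fderiv ℝ S p).comp (ContinuousLinearMap.inl ℝ (Ed d) (Ed d)) := by
    funext p
    rw [D1_eq hd1]
  rw [he]
  exact hc.clm_comp continuous_const

lemma D2_cont (hd1 : Differentiable ℝ S) (hc : Continuous (fderiv ℝ S)) :
    Continuous (fun p : Ed d × Ed d => D2 S p.1 p.2) := by
  have he : (fun p : Ed d × Ed d => D2 S p.1 p.2)
      = fun p => (fderiv ℝ S p).comp (ContinuousLinearMap.inr ℝ (Ed d) (Ed d)) := by
    funext p
    rw [D2_eq hd1]
  rw [he]
  exact hc.clm_comp continuous_const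

lemma Sc_per {c : Ed d →L[ℝ] ℝ}
    (hper : ∀ (r : Fin d → ℤ) (u v : Ed d), S (u + intVec d r, v + intVec d r) = S (u, v))
    (r : Fin d → ℤ) (u v : Ed d) :
    Sc S c (u + intVec d r, v + intVec d r) = Sc S c (u, v) := by
  simp only [Sc]
  rw [hper]
  congr 2
  abel

lemma holVal_mul_le {F : Ed d × Ed d → ℝ} {C2 : ℝ} (hlb : ∀ p, -C2 ≤ F p)
    {N : ℕ} (hN : 1 ≤ N) {γ : ℕ → Ed d} (hγ : ∃ r : Fin d → ℤ, γ N - γ 0 = intVec d r) :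
    holVal F * N ≤ act F N γ := by
  have hbdd : BddBelow {v : ℝ | ∃ n : ℕ, 1 ≤ n ∧ ∃ γ : ℕ → Ed d,
      (∃ r : Fin d → ℤ, γ n - γ 0 = intVec d r) ∧ v = act F n γ / n} := by
    refine ⟨-C2, fun v hv => ?_⟩
    obtain ⟨n, hn, γ', -, rfl⟩ := hv
    have hnpos : (0 : ℝ) < n := by exact_mod_cast hn
    rw [le_div_iff₀ hnpos]
    calc -C2 * n = ∑ _k ∈ Finset.range n, (-C2) := by
          rw [Finset.sum_const, Finset.card_range, nsmul_eq_mul]; ring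
      _ ≤ act F n γ' := Finset.sum_le_sum (fun k _ => hlb _)
  have h1 : holVal F ≤ act F N γ / N := by
    rw [holVal]
    exact csInf_le hbdd ⟨N, hN, γ, hγ, rfl⟩
  have hNpos : (0 : ℝ) < N := by exact_mod_cast hN
  exact (le_div_iff₀ hNpos).mp h1

end Stmt14Aux


set_option maxHeartbeats 1000000 in
/-- Let `c ∈ (ℝ^d)*`, `(x,y) ∈ Ā_c`, and let `z` be determined by
`∂₂S(x,y) + ∂₁S(y,z) = 0` (so that `(y,z) = φ(x,y)`). Then
`Σ̃_c ≥ S(x,y) + S(y,z) - S(x,z)`. -/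
theorem stmt_14 (d : ℕ) (hd : 1 ≤ d) (S : Ed d × Ed d → ℝ) (hS : IsGenFn S)
    (c : Ed d →L[ℝ] ℝ) (x y z : Ed d)
    (hxy : (x, y) ∈ aubry (Sc S c)) (hz : D2 S x y + D1 S y z = 0) :
    S (x, y) + S (y, z) - S (x, z) ≤ holVal (Sc S c) := by
  classical
  obtain ⟨hsm, hper, A, hA, htw0⟩ := hS
  have hd1 : Differentiable ℝ S := hsm.differentiable (by norm_num)
  have hc1 : ContDiff ℝ 1 (fderiv ℝ S) := hsm.fderiv_right (by norm_num)
  have hd2 : Differentiable ℝ (fderiv ℝ S) := hc1.differentiable (by norm_num)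
  have hf'cont : Continuous (fderiv ℝ S) := hc1.continuous
  -- bounds on the diagonal
  obtain ⟨K1, hK1⟩ := Stmt14Aux.periodic_bddAbove (fun w => ‖fderiv ℝ S (w, w)‖)
    ((hf'cont.comp (continuous_id.prodMk continuous_id)).norm)
    (fun w r => by
      show ‖fderiv ℝ S (w + intVec d r, w + intVec d r)‖ = ‖fderiv ℝ S (w, w)‖
      rw [Stmt14Aux.fderiv_per hd1 hper r w w])
  obtain ⟨M0, hM0⟩ := Stmt14Aux.periodic_bddAbove (fun w => -S (w, w))
    ((hsm.continuous.comp (continuous_id.prodMk continuous_id)).neg)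
    (fun w r => by
      show -S (w + intVec d r, w + intVec d r) = -S (w, w)
      rw [hper r w w])
  have hSlb : ∀ u v : Ed d, -M0 + A / 2 * ‖v - u‖ ^ 2 - K1 * ‖v - u‖ ≤ S (u, v) := by
    intro u v
    have h1 := Stmt14Aux.superlin hd1 hd2 htw0 hK1 u v
    have h2 : -S (u, u) ≤ M0 := hM0 u
    linarith
  have hClb : ∀ p : Ed d × Ed d, -(M0 + (K1 + ‖c‖) ^ 2 / (2 * A)) ≤ Sc S c p := by
    intro p
    obtain ⟨u, v⟩ := p
    have h1 := hSlb u v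
    have h2 : -(‖c‖ * ‖u - v‖) ≤ c (u - v) := by
      have h3 := c.le_opNorm (u - v)
      rw [Real.norm_eq_abs] at h3
      exact (abs_le.mp h3).1
    have h3 : ‖u - v‖ = ‖v - u‖ := norm_sub_rev u v
    have ht : 0 ≤ ‖v - u‖ := norm_nonneg _
    have key : 0 ≤ A / 2 * ‖v - u‖ ^ 2 - (K1 + ‖c‖) * ‖v - u‖ + (K1 + ‖c‖) ^ 2 / (2 * A) := by
      have hq : A / 2 * ‖v - u‖ ^ 2 - (K1 + ‖c‖) * ‖v - u‖ + (K1 + ‖c‖) ^ 2 / (2 * A)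
          = (A * ‖v - u‖ - (K1 + ‖c‖)) ^ 2 / (2 * A) := by
        field_simp
        ring
      rw [hq]
      positivity
    rw [h3] at h2
    show -(M0 + (K1 + ‖c‖) ^ 2 / (2 * A)) ≤ S (u, v) + c (u - v)
    linarith [h1, h2, key]
  have hloop : ∀ N : ℕ, 1 ≤ N → ∀ γ' : ℕ → Ed d, (∃ r', γ' N - γ' 0 = intVec d r') →
      holVal (Sc S c) * N ≤ act (Sc S c) N γ' :=
    fun N hN γ' hr => Stmt14Aux.holVal_mul_le hClb hN hr
  have hScont : Continuous (Sc S c) := by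
    have he : Sc S c = fun p : Ed d × Ed d => S p + c (p.1 - p.2) := rfl
    rw [he]
    exact hsm.continuous.add (c.continuous.comp (continuous_fst.sub continuous_snd))
  refine le_of_forall_pos_le_add ?_
  intro η hη
  -- continuity moduli
  have hE : ContinuousAt (fun q : (Ed d × Ed d) × Ed d =>
      Sc S c (q.1.1, q.1.2) + Sc S c (q.1.2, q.2) - Sc S c (q.1.1, q.2)) ((x, y), z) := by
    apply Continuous.continuousAt
    refine Continuous.sub (Continuous.add ?_ ?_) ?_
    · exact hScont.comp ((continuous_fst.comp continuous_fst).prodMk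
        (continuous_snd.comp continuous_fst))
    · exact hScont.comp ((continuous_snd.comp continuous_fst).prodMk continuous_snd)
    · exact hScont.comp ((continuous_fst.comp continuous_fst).prodMk continuous_snd)
  obtain ⟨σ, hσpos, hσ⟩ := Metric.continuousAt_iff.mp hE (η / 2) (by positivity)
  obtain ⟨τ₁, hτ₁pos, hτ₁⟩ := Metric.continuousAt_iff.mp
    ((Stmt14Aux.D1_cont hd1 hf'cont).continuousAt (x := (y, z))) (A * σ / 4) (by positivity)
  obtain ⟨τ₂, hτ₂pos, hτ₂⟩ := Metric.continuousAt_iff.mp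
    ((Stmt14Aux.D2_cont hd1 hf'cont).continuousAt (x := (x, y))) (A * σ / 4) (by positivity)
  set τ := min τ₁ τ₂ with hτdef
  have hτpos : 0 < τ := lt_min hτ₁pos hτ₂pos
  set β := min (τ / 2) (A * σ / 16) with hβdef
  have hβpos : 0 < β := lt_min (by positivity) (by positivity)
  set ε := min (min (η / 4) (σ / 2)) (min β (β ^ 2 / 2)) with hεdef
  have hεpos : 0 < ε := lt_min (lt_min (by positivity) (by positivity))
    (lt_min hβpos (by positivity))
  have hεη : ε ≤ η / 4 := le_trans (min_le_left _ _) (min_le_left _ _)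
  have hεσ : ε ≤ σ / 2 := le_trans (min_le_left _ _) (min_le_right _ _)
  have hεβ : ε ≤ β := le_trans (min_le_right _ _) (min_le_left _ _)
  have hεβ2 : ε ≤ β ^ 2 / 2 := le_trans (min_le_right _ _) (min_le_right _ _)
  -- the Aubry loop
  obtain ⟨n, hn1, γ, ⟨r, hγr⟩, hx0, hy1, hat⟩ := hxy ε hεpos
  rw [actTilde] at hat
  have hatγ : act (Sc S c) n γ < n * holVal (Sc S c) + ε := by linarith
  -- double the loop
  obtain ⟨δ, hδ0, hδ1, hδr, hδact⟩ :=
    Stmt14Aux.double_loop (fun r' u v => Stmt14Aux.Sc_per hper r' u v) hn1 hγr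
  obtain ⟨M, hM⟩ : ∃ M : ℕ, n + n = M + 2 := ⟨n + n - 2, by omega⟩
  rw [hM] at hδr hδact
  have hMr : ((M + 2 : ℕ) : ℝ) = (n : ℝ) + n := by
    rw [← hM]
    push_cast
    ring
  have hactm : act (Sc S c) (M + 2) δ < ((M + 2 : ℕ) : ℝ) * holVal (Sc S c) + 2 * ε := by
    rw [hδact, hMr]
    linarith
  -- near-minimality of the middle point δ 1
  have hnear : ∀ w : Ed d, Sc S c (δ 0, δ 1) + Sc S c (δ 1, δ 2)
      < Sc S c (δ 0, w) + Sc S c (w, δ 2) + 2 * ε := by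
    intro w
    have hup := Stmt14Aux.act_update (F := Sc S c) (m := M + 2) (by omega) δ w
    have hcl : ∃ r', (fun k => if k = 1 then w else δ k) (M + 2)
        - (fun k => if k = 1 then w else δ k) 0 = intVec d r' := by
      obtain ⟨r', hr'⟩ := hδr
      refine ⟨r', ?_⟩
      show (if (M + 2 : ℕ) = 1 then w else δ (M + 2)) - (if (0 : ℕ) = 1 then w else δ 0)
          = intVec d r'
      rw [if_neg (by omega : (M + 2 : ℕ) ≠ 1), if_neg (by omega : (0 : ℕ) ≠ 1)]
      exact hr'
    have hlow := le_of_le_of_eq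
      (hloop (M + 2) (by omega) (fun k => if k = 1 then w else δ k) hcl) hup
    linarith
  -- the skip inequality
  have hskip : Sc S c (δ 0, δ 1) + Sc S c (δ 1, δ 2) - Sc S c (δ 0, δ 2)
      < holVal (Sc S c) + 2 * ε := by
    have hsk := Stmt14Aux.act_skip (F := Sc S c) (M := M) δ
    have hcl : ∃ r', (fun k => if k = 0 then δ 0 else δ (k + 1)) (M + 1)
        - (fun k => if k = 0 then δ 0 else δ (k + 1)) 0 = intVec d r' := by
      obtain ⟨r', hr'⟩ := hδr
      refine ⟨r', ?_⟩
      show (if (M + 1 : ℕ) = 0 then δ 0 else δ (M + 1 + 1)) - (if (0 : ℕ) = 0 then δ 0 else δ (0 + 1))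
          = intVec d r'
      rw [if_neg (by omega : (M + 1 : ℕ) ≠ 0), if_pos rfl]
      exact hr'
    have hlow := le_of_le_of_eq
      (hloop (M + 1) (by omega) (fun k => if k = 0 then δ 0 else δ (k + 1)) hcl) hsk
    have hc1 : ((M + 1 : ℕ) : ℝ) = (M : ℝ) + 1 := by push_cast; ring
    have hc2 : ((M + 2 : ℕ) : ℝ) = (M : ℝ) + 2 := by push_cast; ring
    rw [hc1] at hlow
    rw [hc2] at hactm
    linarith
  -- Ekeland-type argument: an almost-critical point near δ 1
  set ρ := Real.sqrt (2 * ε) with hρdef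
  have hρpos : 0 < ρ := Real.sqrt_pos.mpr (by positivity)
  have hρsq : ρ ^ 2 = 2 * ε := Real.sq_sqrt (by positivity)
  have hρβ : ρ ≤ β := by
    have h1 : 2 * ε ≤ β ^ 2 := by linarith
    calc ρ = Real.sqrt (2 * ε) := hρdef
      _ ≤ Real.sqrt (β ^ 2) := Real.sqrt_le_sqrt h1
      _ = β := Real.sqrt_sq hβpos.le
  set G := fun w : Ed d => Sc S c (δ 0, w) + Sc S c (w, δ 2) + 2 * ‖w - δ 1‖ ^ 2 with hGdef
  have hGcont : Continuous G := by
    refine Continuous.add (Continuous.add ?_ ?_) ?_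
    · exact hScont.comp (continuous_const.prodMk continuous_id)
    · exact hScont.comp (continuous_id.prodMk continuous_const)
    · exact continuous_const.mul ((continuous_id.sub continuous_const).norm.pow 2)
  obtain ⟨w', hw'mem, hw'min⟩ := (isCompact_closedBall (δ 1) ρ).exists_isMinOn
    ⟨δ 1, Metric.mem_closedBall_self hρpos.le⟩ hGcont.continuousOn
  have hw'min' : ∀ u ∈ Metric.closedBall (δ 1) ρ, G w' ≤ G u := fun u hu => hw'min hu
  have hw'ball : dist w' (δ 1) < ρ := by
    rcases lt_or_eq_of_le (Metric.mem_closedBall.mp hw'mem) with h | h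
    · exact h
    · exfalso
      have h1 := hnear w'
      have h2 : ‖w' - δ 1‖ = ρ := by rw [← dist_eq_norm]; exact h
      have h3 := hw'min' (δ 1) (Metric.mem_closedBall_self hρpos.le)
      have h4 : G (δ 1) = Sc S c (δ 0, δ 1) + Sc S c (δ 1, δ 2) := by
        simp [hGdef]
      have h5 : G w' = Sc S c (δ 0, w') + Sc S c (w', δ 2) + 2 * (2 * ε) := by
        rw [hGdef]
        simp only []
        rw [h2, hρsq]
      rw [h4, h5] at h3
      linarith
  have hloc : IsLocalMin G w' :=
    hw'min.isLocalMin (Metric.closedBall_mem_nhds_of_mem (Metric.mem_ball.mpr hw'ball))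
  -- compute the gradient of G at w'
  have hF1 : HasFDerivAt (fun w => Sc S c (δ 0, w)) (D2 S (δ 0) w' - c) w' := by
    have he : (fun w => Sc S c (δ 0, w)) = fun w => S (δ 0, w) + (c (δ 0) - c w) := by
      funext w
      show S (δ 0, w) + c (δ 0 - w) = S (δ 0, w) + (c (δ 0) - c w)
      rw [map_sub]
    rw [he]
    have h' := (Stmt14Aux.D2_hasFDerivAt hd1 (δ 0) w').add
      ((hasFDerivAt_const (c (δ 0)) w').sub c.hasFDerivAt)
    exact h'.congr_fderiv (by rw [zero_sub, ← sub_eq_add_neg])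
  have hF2 : HasFDerivAt (fun w => Sc S c (w, δ 2)) (D1 S w' (δ 2) + c) w' := by
    have he : (fun w => Sc S c (w, δ 2)) = fun w => S (w, δ 2) + (c w - c (δ 2)) := by
      funext w
      show S (w, δ 2) + c (w - δ 2) = S (w, δ 2) + (c w - c (δ 2))
      rw [map_sub]
    rw [he]
    have h' := (Stmt14Aux.D1_hasFDerivAt hd1 w' (δ 2)).add
      (c.hasFDerivAt.sub (hasFDerivAt_const (c (δ 2)) w'))
    exact h'.congr_fderiv (by simp)
  have hq : HasFDerivAt (fun w : Ed d => 2 * ‖w - δ 1‖ ^ 2)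
      ((2 : ℝ) • (2 • (innerSL ℝ (w' - δ 1)).comp (ContinuousLinearMap.id ℝ (Ed d)))) w' := by
    have h1 : HasFDerivAt (fun w : Ed d => w - δ 1) (ContinuousLinearMap.id ℝ (Ed d)) w' :=
      (hasFDerivAt_id w').sub_const (δ 1)
    exact h1.norm_sq.const_mul 2
  have hGd : HasFDerivAt G ((D2 S (δ 0) w' - c) + (D1 S w' (δ 2) + c)
      + (2 : ℝ) • (2 • (innerSL ℝ (w' - δ 1)).comp (ContinuousLinearMap.id ℝ (Ed d)))) w' :=
    (hF1.add hF2).add hq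
  have hzero := hloc.hasFDerivAt_eq_zero hGd
  have hsum : D2 S (δ 0) w' + D1 S w' (δ 2)
      = -((2 : ℝ) • (2 • (innerSL ℝ (w' - δ 1)).comp (ContinuousLinearMap.id ℝ (Ed d)))) := by
    refine eq_neg_of_add_eq_zero_left ?_
    rw [← hzero]
    abel
  have hgrad : ‖D2 S (δ 0) w' + D1 S w' (δ 2)‖ ≤ 4 * ρ := by
    rw [hsum, norm_neg]
    have hT : ‖(innerSL ℝ (w' - δ 1)).comp (ContinuousLinearMap.id ℝ (Ed d))‖ ≤ ρ := by
      rw [ContinuousLinearMap.comp_id, innerSL_apply_norm, ← dist_eq_norm]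
      exact hw'ball.le
    have h2 : ‖(2 • (innerSL ℝ (w' - δ 1)).comp (ContinuousLinearMap.id ℝ (Ed d)))‖
        ≤ 2 * ρ := by
      rw [two_smul]
      have h3 := norm_add_le ((innerSL ℝ (w' - δ 1)).comp (ContinuousLinearMap.id ℝ (Ed d)))
        ((innerSL ℝ (w' - δ 1)).comp (ContinuousLinearMap.id ℝ (Ed d)))
      linarith
    have h4 := norm_smul (2 : ℝ)
      (2 • (innerSL ℝ (w' - δ 1)).comp (ContinuousLinearMap.id ℝ (Ed d)))
    rw [h4, Real.norm_eq_abs, abs_of_nonneg (by norm_num : (0:ℝ) ≤ 2)]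
    linarith
  -- strong monotonicity: δ 2 is close to z
  have hmono := Stmt14Aux.strong_mono hd1 hd2 htw0 w' z (δ 2 - z)
  have hz2 : z + (δ 2 - z) = δ 2 := by abel
  rw [hz2] at hmono
  have hmono' : D1 S w' (δ 2) (δ 2 - z) ≤ D1 S w' z (δ 2 - z) - A * ‖δ 2 - z‖ ^ 2 := by
    rw [Stmt14Aux.D1_apply hd1, Stmt14Aux.D1_apply hd1]
    exact hmono
  have hAz : A * ‖δ 2 - z‖ ≤ ‖D1 S w' z - D1 S w' (δ 2)‖ := by
    rcases eq_or_lt_of_le (norm_nonneg (δ 2 - z)) with h0 | h0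
    · rw [← h0, mul_zero]
      exact norm_nonneg _
    · have h1 : A * ‖δ 2 - z‖ ^ 2 ≤ (D1 S w' z - D1 S w' (δ 2)) (δ 2 - z) := by
        rw [ContinuousLinearMap.sub_apply]
        linarith
      have h2 : (D1 S w' z - D1 S w' (δ 2)) (δ 2 - z)
          ≤ ‖D1 S w' z - D1 S w' (δ 2)‖ * ‖δ 2 - z‖ := by
        have h3 := (D1 S w' z - D1 S w' (δ 2)).le_opNorm (δ 2 - z)
        rw [Real.norm_eq_abs] at h3
        exact (le_abs_self _).trans h3
      have h4 : A * ‖δ 2 - z‖ * ‖δ 2 - z‖ ≤ ‖D1 S w' z - D1 S w' (δ 2)‖ * ‖δ 2 - z‖ := by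
        have h5 := h1.trans h2
        rw [mul_assoc, ← sq]
        exact h5
      exact le_of_mul_le_mul_right h4 h0
  -- distances
  have hby : dist (δ 1) y < ε := by
    rw [dist_comm, dist_eq_norm, hδ1]
    exact hy1
  have hax : dist (δ 0) x < ε := by
    rw [dist_comm, dist_eq_norm, hδ0]
    exact hx0
  have hβτ : β ≤ τ / 2 := min_le_left _ _
  have hw'y : dist w' y < τ := by
    calc dist w' y ≤ dist w' (δ 1) + dist (δ 1) y := dist_triangle _ _ _
      _ < ρ + ε := by linarith [hw'ball, hby]
      _ ≤ τ / 2 + τ / 2 := by linarith [hρβ.trans hβτ, hεβ.trans hβτ]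
      _ = τ := by ring
  have hT1 : ‖D1 S w' z - D1 S y z‖ < A * σ / 4 := by
    have hdp : dist ((w', z) : Ed d × Ed d) (y, z) < τ₁ := by
      rw [Prod.dist_eq]
      simp only [dist_self]
      exact max_lt (hw'y.trans_le (min_le_left _ _)) hτ₁pos
    have h1 := hτ₁ hdp
    rwa [dist_eq_norm] at h1
  have hT3 : ‖D2 S (δ 0) w' - D2 S x y‖ < A * σ / 4 := by
    have hdp : dist ((δ 0, w') : Ed d × Ed d) (x, y) < τ₂ := by
      rw [Prod.dist_eq]
      refine max_lt ?_ (hw'y.trans_le (min_le_right _ _))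
      have : ε ≤ τ := le_trans (hεβ.trans hβτ) (by linarith)
      exact hax.trans_le (this.trans (min_le_right _ _))
    have h1 := hτ₂ hdp
    rwa [dist_eq_norm] at h1
  have hρσ : 4 * ρ ≤ A * σ / 4 := by
    have h1 : ρ ≤ A * σ / 16 := hρβ.trans (min_le_right _ _)
    linarith
  have hczs : ‖δ 2 - z‖ < σ := by
    have hz0 : D1 S y z + D2 S x y = 0 := by rw [add_comm]; exact hz
    have hdecomp : D1 S w' z - D1 S w' (δ 2)
        = ((D1 S w' z - D1 S y z) + (D1 S y z + D2 S x y)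
          + (D2 S (δ 0) w' - D2 S x y)) - (D2 S (δ 0) w' + D1 S w' (δ 2)) := by
      abel
    have hnb : ‖D1 S w' z - D1 S w' (δ 2)‖ < 3 * (A * σ / 4) := by
      rw [hdecomp, hz0, add_zero]
      calc ‖(D1 S w' z - D1 S y z) + (D2 S (δ 0) w' - D2 S x y)
            - (D2 S (δ 0) w' + D1 S w' (δ 2))‖
          ≤ ‖(D1 S w' z - D1 S y z) + (D2 S (δ 0) w' - D2 S x y)‖
            + ‖D2 S (δ 0) w' + D1 S w' (δ 2)‖ := norm_sub_le _ _
        _ ≤ ‖D1 S w' z - D1 S y z‖ + ‖D2 S (δ 0) w' - D2 S x y‖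
            + ‖D2 S (δ 0) w' + D1 S w' (δ 2)‖ := by
              linarith [norm_add_le (D1 S w' z - D1 S y z) (D2 S (δ 0) w' - D2 S x y)]
        _ < 3 * (A * σ / 4) := by linarith [hT1, hT3, hgrad.trans hρσ]
    have hfin := hAz.trans_lt hnb
    have h6 : A * ‖δ 2 - z‖ < A * σ := by
      have h7 : 0 < A * σ := mul_pos hA hσpos
      linarith
    exact (mul_lt_mul_iff_right₀ hA).mp h6
  -- conclusion
  have hq' : dist ((((δ 0, δ 1), δ 2)) : (Ed d × Ed d) × Ed d) ((x, y), z) < σ := by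
    rw [Prod.dist_eq, Prod.dist_eq]
    have h1 : dist (δ 0) x < σ := hax.trans_le (by linarith)
    have h2 : dist (δ 1) y < σ := hby.trans_le (by linarith)
    have h3 : dist (δ 2) z < σ := by rw [dist_eq_norm]; exact hczs
    exact max_lt (max_lt h1 h2) h3
  have hEb := hσ hq'
  simp only [] at hEb
  rw [Real.dist_eq] at hEb
  have habs := (abs_lt.mp hEb).1
  have hE0 : Sc S c (x, y) + Sc S c (y, z) - Sc S c (x, z)
      = S (x, y) + S (y, z) - S (x, z) := by
    show (S (x, y) + c (x - y)) + (S (y, z) + c (y - z)) - (S (x, z) + c (x - z))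
        = S (x, y) + S (y, z) - S (x, z)
    rw [map_sub, map_sub, map_sub]
    ring
  rw [← hE0]
  linarith [hskip, habs, hεη]

end
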